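/- The mixed rarefaction–shock (contact-discontinuity) profile is a weak solution: let G(u) = 2u(1−u)(2u−1), H(u) = 1 − 12(u − 1/2)², let ρ ∈ [0, 1/2] and λ ∈ (3/4 − ρ/2, 1], and set ρ* := 3/4 − ρ/2 (so ρ* ∈ (1/2, 3/4] and λ > ρ*). Define u : ℝ × [0,∞) → ℝ by: u(x,0) = u₀(x), where u₀(x) = λ if x < 0 and u₀(x) = ρ if x ≥ 0; and for t > 0, u(x,t) = λ if x ≤ H(λ)·t, u(x,t) = 1/2 + √((1 − x/t)/12) if H(λ)·t < x ≤ H(ρ*)·t, and u(x,t) = ρ if x > H(ρ*)·t. Then u is a weak solution of ∂_t u + ∂_x G(u) = 0 with initial datum u₀: for every continuously differentiable φ : ℝ × ℝ → ℝ with compact support, ∫_0^∞ ∫_ℝ ( u(x,t) ∂_t φ(x,t) + G(u(x,t)) ∂_x φ(x,t) ) dx dt + ∫_ℝ u₀(x) φ(x,0) dx = 0. -/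

import Mathlib

open MeasureTheory

/-- The DEP macroscopic flux `G(u) = 2u(1-u)(2u-1)`. -/
def depG (u : ℝ) : ℝ := 2 * u * (1 - u) * (2 * u - 1)

/-- The characteristic speed `H(u) = G'(u) = 1 - 12(u - 1/2)²`. -/
noncomputable def depH (u : ℝ) : ℝ := 1 - 12 * (u - 1 / 2) ^ 2

namespace DepAux

variable (φ : ℝ → ℝ → ℝ)

/-- partial derivative in x -/
noncomputable def px (x t : ℝ) : ℝ := fderiv ℝ (fun p : ℝ × ℝ => φ p.1 p.2) (x, t) (1, 0)

/-- partial derivative in t -/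
noncomputable def pt (x t : ℝ) : ℝ := fderiv ℝ (fun p : ℝ × ℝ => φ p.1 p.2) (x, t) (0, 1)

variable {φ}

lemma hasDerivAt_comp (hφ : ContDiff ℝ 1 (fun p : ℝ × ℝ => φ p.1 p.2)) (c : ℝ → ℝ × ℝ) (v : ℝ × ℝ) (τ : ℝ) (hc : HasDerivAt c v τ) :
    HasDerivAt (fun σ => φ (c σ).1 (c σ).2)
      (v.1 * px φ (c τ).1 (c τ).2 + v.2 * pt φ (c τ).1 (c τ).2) τ := by
  have hd := ((hφ.differentiable one_ne_zero) (c τ)).hasFDerivAt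
  have h := hd.comp_hasDerivAt τ hc
  have hv : v = v.1 • ((1 : ℝ), (0 : ℝ)) + v.2 • ((0 : ℝ), (1 : ℝ)) := by
    simp [Prod.ext_iff]
  have : fderiv ℝ (fun p : ℝ × ℝ => φ p.1 p.2) (c τ) v
      = v.1 * px φ (c τ).1 (c τ).2 + v.2 * pt φ (c τ).1 (c τ).2 := by
    conv_lhs => rw [hv]
    rw [map_add, ContinuousLinearMap.map_smul, ContinuousLinearMap.map_smul]
    simp [px, pt]
  rw [← this]
  exact h

lemma hasDerivAt_slice_x (hφ : ContDiff ℝ 1 (fun p : ℝ × ℝ => φ p.1 p.2)) (x t : ℝ) : HasDerivAt (fun y => φ y t) (px φ x t) x := by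
  have hc : HasDerivAt (fun y : ℝ => ((y, t) : ℝ × ℝ)) ((1 : ℝ), (0 : ℝ)) x :=
    (hasDerivAt_id x).prodMk (hasDerivAt_const x t)
  simpa using hasDerivAt_comp hφ _ _ x hc

lemma hasDerivAt_slice_t (hφ : ContDiff ℝ 1 (fun p : ℝ × ℝ => φ p.1 p.2)) (x t : ℝ) : HasDerivAt (fun s => φ x s) (pt φ x t) t := by
  have hc : HasDerivAt (fun s : ℝ => ((x, s) : ℝ × ℝ)) ((0 : ℝ), (1 : ℝ)) t :=
    (hasDerivAt_const t x).prodMk (hasDerivAt_id t)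
  simpa using hasDerivAt_comp hφ _ _ t hc

lemma hasDerivAt_shear (hφ : ContDiff ℝ 1 (fun p : ℝ × ℝ => φ p.1 p.2)) (y s t : ℝ) :
    HasDerivAt (fun τ => φ (y + s * τ) τ)
      (s * px φ (y + s * t) t + pt φ (y + s * t) t) t := by
  have hc : HasDerivAt (fun τ : ℝ => ((y + s * τ, τ) : ℝ × ℝ)) ((s : ℝ), (1 : ℝ)) t := by
    refine HasDerivAt.prodMk ?_ (hasDerivAt_id t)
    simpa using ((hasDerivAt_id t).const_mul s).const_add y
  simpa using hasDerivAt_comp hφ _ _ t hc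

lemma hasDerivAt_ray (hφ : ContDiff ℝ 1 (fun p : ℝ × ℝ => φ p.1 p.2)) (t ξ : ℝ) :
    HasDerivAt (fun η => φ (η * t) t) (t * px φ (ξ * t) t) ξ := by
  have hc : HasDerivAt (fun η : ℝ => ((η * t, t) : ℝ × ℝ)) ((t : ℝ), (0 : ℝ)) ξ :=
    by simpa using ((hasDerivAt_id ξ).mul_const t).prodMk (hasDerivAt_const ξ t)
  simpa using hasDerivAt_comp hφ _ _ ξ hc

lemma hasDerivAt_time (hφ : ContDiff ℝ 1 (fun p : ℝ × ℝ => φ p.1 p.2)) (ξ t : ℝ) :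
    HasDerivAt (fun τ => φ (ξ * τ) τ)
      (ξ * px φ (ξ * t) t + pt φ (ξ * t) t) t := by
  have hc : HasDerivAt (fun τ : ℝ => ((ξ * τ, τ) : ℝ × ℝ)) ((ξ : ℝ), (1 : ℝ)) t := by
    refine HasDerivAt.prodMk ?_ (hasDerivAt_id t)
    simpa using (hasDerivAt_id t).const_mul ξ
  simpa using hasDerivAt_comp hφ _ _ t hc

lemma cont_phi (hφ : ContDiff ℝ 1 (fun p : ℝ × ℝ => φ p.1 p.2)) : Continuous (fun p : ℝ × ℝ => φ p.1 p.2) := hφ.continuous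

lemma cont_px (hφ : ContDiff ℝ 1 (fun p : ℝ × ℝ => φ p.1 p.2)) : Continuous (fun p : ℝ × ℝ => px φ p.1 p.2) := by
  have h := hφ.continuous_fderiv one_ne_zero
  exact h.clm_apply continuous_const

lemma cont_pt (hφ : ContDiff ℝ 1 (fun p : ℝ × ℝ => φ p.1 p.2)) : Continuous (fun p : ℝ × ℝ => pt φ p.1 p.2) := by
  have h := hφ.continuous_fderiv one_ne_zero
  exact h.clm_apply continuous_const

lemma supp_px (hs : HasCompactSupport (fun p : ℝ × ℝ => φ p.1 p.2)) : HasCompactSupport (fun p : ℝ × ℝ => px φ p.1 p.2) := by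
  have := hs.fderiv (𝕜 := ℝ)
  exact this.comp_left (g := fun L : ℝ × ℝ →L[ℝ] ℝ => L (1, 0)) (by simp)

lemma supp_pt (hs : HasCompactSupport (fun p : ℝ × ℝ => φ p.1 p.2)) : HasCompactSupport (fun p : ℝ × ℝ => pt φ p.1 p.2) := by
  have := hs.fderiv (𝕜 := ℝ)
  exact this.comp_left (g := fun L : ℝ × ℝ →L[ℝ] ℝ => L (0, 1)) (by simp)

end DepAux

namespace DepAux2

open DepAux

/-- generic vanish-outside-r support lemma for curves dominating a coordinate -/
lemma supp_curve {f : ℝ × ℝ → ℝ} {r : ℝ} (hr : 0 ≤ r)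
    (hv : ∀ p : ℝ × ℝ, r < ‖p‖ → f p = 0) (c : ℝ → ℝ × ℝ)
    (h2 : ∀ τ : ℝ, |τ| ≤ ‖c τ‖) : HasCompactSupport (fun τ => f (c τ)) := by
  apply HasCompactSupport.intro (isCompact_Icc (a := -r) (b := r))
  intro τ hτ
  apply hv
  have h3 : r < |τ| := by
    simp only [Set.mem_Icc, not_and_or, not_le] at hτ
    rcases hτ with h | h
    · rw [abs_of_neg (by linarith)]; linarith
    · rw [abs_of_pos (by linarith)]; linarith
  exact lt_of_lt_of_le h3 (h2 τ)

lemma integrableOn_of_vanish {F : ℝ × ℝ → ℝ} (hc : Continuous F) {S K : Set (ℝ × ℝ)}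
    (hK : IsCompact K) (hS : MeasurableSet S) (hz : ∀ q ∈ S \ K, F q = 0) :
    IntegrableOn F S := by
  have h1 : IntegrableOn F (S ∩ K) :=
    (hc.continuousOn.integrableOn_compact hK).mono_set Set.inter_subset_right
  have h2 : IntegrableOn F (S \ K) := by
    refine integrableOn_congr_fun (f := fun _ => (0 : ℝ)) (fun q hq => (hz q hq).symm)
      (hS.diff hK.measurableSet) |>.mp ?_
    exact integrableOn_zero
  have := h1.union h2
  rwa [Set.inter_union_diff] at this

lemma integrable_restrict_prod {F : ℝ × ℝ → ℝ} {S T : Set ℝ}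
    (h : IntegrableOn F (S ×ˢ T)) :
    Integrable F ((volume.restrict S).prod (volume.restrict T)) := by
  rw [Measure.prod_restrict, ← Measure.volume_eq_prod]
  exact h

lemma swap_helper {f : ℝ → ℝ → ℝ} {S T : Set ℝ}
    (h : IntegrableOn (fun q : ℝ × ℝ => f q.1 q.2) (S ×ˢ T)) :
    ∫ t in S, (∫ y in T, f t y) ∂volume = ∫ y in T, (∫ t in S, f t y) ∂volume := by
  exact integral_integral_swap (integrable_restrict_prod h)

lemma marginal_integrable {f : ℝ → ℝ → ℝ} {S T : Set ℝ}
    (h : IntegrableOn (fun q : ℝ × ℝ => f q.1 q.2) (S ×ˢ T)) :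
    Integrable (fun t => ∫ y in T, f t y) (volume.restrict S) :=
  (integrable_restrict_prod h).integral_prod_left

lemma translate_Iic (f : ℝ → ℝ) (c : ℝ) :
    ∫ x in Set.Iic c, f x = ∫ y in Set.Iic 0, f (y + c) := by
  have h := (measurePreserving_add_right volume c).setIntegral_preimage_emb
    (measurableEmbedding_addRight c) f (Set.Iic c)
  have hpre : (fun x => x + c) ⁻¹' Set.Iic c = Set.Iic 0 := by
    ext y; simp
  rw [hpre] at h
  exact h.symm

lemma translate_Ioi (f : ℝ → ℝ) (c : ℝ) :
    ∫ x in Set.Ioi c, f x = ∫ y in Set.Ioi 0, f (y + c) := by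
  have h := (measurePreserving_add_right volume c).setIntegral_preimage_emb
    (measurableEmbedding_addRight c) f (Set.Ioi c)
  have hpre : (fun x => x + c) ⁻¹' Set.Ioi c = Set.Ioi 0 := by
    ext y; simp
  rw [hpre] at h
  exact h.symm

end DepAux2

namespace DepAux3
open DepAux DepAux2

lemma depG_hasDerivAt (u : ℝ) : HasDerivAt depG (depH u) u := by
  have h := (((hasDerivAt_id u).const_mul 2).mul
      ((hasDerivAt_const u 1).sub (hasDerivAt_id u))).mul
      (((hasDerivAt_id u).const_mul 2).sub (hasDerivAt_const u 1))
  have h2 : HasDerivAt depG ((2 * 1 * (1 - u) + 2 * u * (0 - 1)) * (2 * u - 1)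
      + 2 * u * (1 - u) * (2 * 1 - 0)) u := by
    exact h
  have he : (2 * 1 * (1 - u) + 2 * u * (0 - 1)) * (2 * u - 1)
      + 2 * u * (1 - u) * (2 * 1 - 0) = depH u := by unfold depH; ring
  rwa [he] at h2

noncomputable def fanV (ξ : ℝ) : ℝ := 1 / 2 + Real.sqrt ((1 - ξ) / 12)

noncomputable def fanF (ξ : ℝ) : ℝ := depG (fanV ξ) - ξ * fanV ξ

lemma fanV_cont : Continuous fanV := by
  unfold fanV
  exact continuous_const.add (Real.continuous_sqrt.comp (by continuity))

lemma fanF_cont : Continuous fanF := by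
  have h := fanV_cont
  unfold fanF depG
  fun_prop

lemma fanV_depH {a : ℝ} (ha : 1 / 2 ≤ a) : fanV (depH a) = a := by
  unfold fanV depH
  rw [show (1 - (1 - 12 * (a - 1 / 2) ^ 2)) / 12 = (a - 1 / 2) ^ 2 by ring,
    Real.sqrt_sq (by linarith)]
  ring

lemma depH_fanV {ξ : ℝ} (hξ : ξ ≤ 1) : depH (fanV ξ) = ξ := by
  unfold fanV depH
  rw [show (1 / 2 + Real.sqrt ((1 - ξ) / 12) - 1 / 2) = Real.sqrt ((1 - ξ) / 12) by ring,
    Real.sq_sqrt (by linarith)]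
  ring

lemma fanV_hasDerivAt {ξ : ℝ} (hξ : ξ < 1) :
    HasDerivAt fanV (1 / (2 * Real.sqrt ((1 - ξ) / 12)) * (-1 / 12)) ξ := by
  have hg : HasDerivAt (fun η : ℝ => (1 - η) / 12) (-1 / 12) ξ := by
    simpa using ((hasDerivAt_const ξ (1:ℝ)).sub (hasDerivAt_id ξ)).div_const 12
  have hne : (1 - ξ) / 12 ≠ 0 := ne_of_gt (by linarith)
  have hs := (Real.hasDerivAt_sqrt hne).comp ξ hg
  exact (hs.const_add (1 / 2))

variable {φ : ℝ → ℝ → ℝ}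

lemma fan_hasDerivAt (hφ : ContDiff ℝ 1 (fun p : ℝ × ℝ => φ p.1 p.2)) (t : ℝ) {ξ : ℝ}
    (hξ : ξ < 1) :
    HasDerivAt (fun η => fanF η * φ (η * t) t)
      (-(fanV ξ) * φ (ξ * t) t + fanF ξ * (t * px φ (ξ * t) t)) ξ := by
  have hV := fanV_hasDerivAt hξ
  set vd := 1 / (2 * Real.sqrt ((1 - ξ) / 12)) * (-1 / 12) with hvd
  have hGV : HasDerivAt (fun η => depG (fanV η)) (depH (fanV ξ) * vd) ξ :=
    (depG_hasDerivAt (fanV ξ)).comp ξ hV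
  have hidV : HasDerivAt (fun η => η * fanV η) (1 * fanV ξ + ξ * vd) ξ :=
    (hasDerivAt_id ξ).mul hV
  have hF : HasDerivAt fanF (depH (fanV ξ) * vd - (1 * fanV ξ + ξ * vd)) ξ := hGV.sub hidV
  rw [depH_fanV hξ.le] at hF
  have hF' : HasDerivAt fanF (-(fanV ξ)) ξ := by
    have he : ξ * vd - (1 * fanV ξ + ξ * vd) = -(fanV ξ) := by ring
    rwa [he] at hF
  have hray := DepAux.hasDerivAt_ray hφ t ξ
  have h := hF'.mul hray
  exact h

lemma vanish_triple (hs : HasCompactSupport (fun p : ℝ × ℝ => φ p.1 p.2)) :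
    ∃ r : ℝ, 0 ≤ r ∧ ∀ p : ℝ × ℝ, r < ‖p‖ →
      φ p.1 p.2 = 0 ∧ px φ p.1 p.2 = 0 ∧ pt φ p.1 p.2 = 0 := by
  obtain ⟨r, hr⟩ := hs.isBounded.subset_closedBall 0
  refine ⟨max r 0, le_max_right _ _, fun p hp => ?_⟩
  have hnot : p ∉ tsupport (fun p : ℝ × ℝ => φ p.1 p.2) := by
    intro hmem
    have h2 := hr hmem
    simp only [Metric.mem_closedBall, dist_zero_right] at h2
    have h3 : r < ‖p‖ := lt_of_le_of_lt (le_max_left r 0) hp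
    linarith
  refine ⟨?_, ?_, ?_⟩
  · by_contra h
    exact hnot (subset_tsupport _
      ((Function.mem_support (f := fun p : ℝ × ℝ => φ p.1 p.2)).mpr h))
  · have h0 : fderiv ℝ (fun p : ℝ × ℝ => φ p.1 p.2) p = 0 := by
      by_contra h
      exact hnot (support_fderiv_subset (𝕜 := ℝ) (Function.mem_support.mpr h))
    simp [px, h0]
  · have h0 : fderiv ℝ (fun p : ℝ × ℝ => φ p.1 p.2) p = 0 := by
      by_contra h
      exact hnot (support_fderiv_subset (𝕜 := ℝ) (Function.mem_support.mpr h))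
    simp [pt, h0]

lemma norm_coord1 (x t : ℝ) : |x| ≤ ‖((x, t) : ℝ × ℝ)‖ := by
  simpa [Real.norm_eq_abs] using norm_fst_le ((x, t) : ℝ × ℝ)

lemma norm_coord2 (x t : ℝ) : |t| ≤ ‖((x, t) : ℝ × ℝ)‖ := by
  simpa [Real.norm_eq_abs] using norm_snd_le ((x, t) : ℝ × ℝ)

lemma integral_px_Iic (hφ : ContDiff ℝ 1 (fun p : ℝ × ℝ => φ p.1 p.2))
    (hs : HasCompactSupport (fun p : ℝ × ℝ => φ p.1 p.2)) (t b : ℝ) :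
    (∫ x in Set.Iic b, px φ x t) = φ b t := by
  obtain ⟨r, hr0, hv⟩ := vanish_triple hs
  have hg : ContDiff ℝ 1 (fun x : ℝ => φ x t) := hφ.comp (contDiff_id.prodMk contDiff_const)
  have hgs : HasCompactSupport (fun x : ℝ => φ x t) :=
    DepAux2.supp_curve hr0 (fun p hp => (hv p hp).1) (fun x => (x, t))
      (fun x => norm_coord1 x t)
  have h := HasCompactSupport.integral_Iic_deriv_eq hg hgs b
  rw [← h]
  apply setIntegral_congr_fun measurableSet_Iic
  intro x _
  exact ((hasDerivAt_slice_x hφ x t).deriv).symm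

lemma integral_px_Ioi (hφ : ContDiff ℝ 1 (fun p : ℝ × ℝ => φ p.1 p.2))
    (hs : HasCompactSupport (fun p : ℝ × ℝ => φ p.1 p.2)) (t b : ℝ) :
    (∫ x in Set.Ioi b, px φ x t) = -φ b t := by
  obtain ⟨r, hr0, hv⟩ := vanish_triple hs
  have hg : ContDiff ℝ 1 (fun x : ℝ => φ x t) := hφ.comp (contDiff_id.prodMk contDiff_const)
  have hgs : HasCompactSupport (fun x : ℝ => φ x t) :=
    DepAux2.supp_curve hr0 (fun p hp => (hv p hp).1) (fun x => (x, t))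
      (fun x => norm_coord1 x t)
  have h := HasCompactSupport.integral_Ioi_deriv_eq hg hgs b
  rw [← h]
  apply setIntegral_congr_fun measurableSet_Ioi
  intro x _
  exact ((hasDerivAt_slice_x hφ x t).deriv).symm

lemma integral_shear (hφ : ContDiff ℝ 1 (fun p : ℝ × ℝ => φ p.1 p.2))
    (hs : HasCompactSupport (fun p : ℝ × ℝ => φ p.1 p.2)) (y s : ℝ) :
    (∫ τ in Set.Ioi (0 : ℝ), (s * px φ (y + s * τ) τ + pt φ (y + s * τ) τ)) = -φ y 0 := by
  obtain ⟨r, hr0, hv⟩ := vanish_triple hs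
  have hg : ContDiff ℝ 1 (fun τ : ℝ => φ (y + s * τ) τ) :=
    hφ.comp ((contDiff_const.add (contDiff_const.mul contDiff_id)).prodMk contDiff_id)
  have hgs : HasCompactSupport (fun τ : ℝ => φ (y + s * τ) τ) :=
    DepAux2.supp_curve hr0 (fun p hp => (hv p hp).1) (fun τ => (y + s * τ, τ))
      (fun τ => norm_coord2 _ τ)
  have h := HasCompactSupport.integral_Ioi_deriv_eq hg hgs 0
  have h2 : (∫ τ in Set.Ioi (0 : ℝ), (s * px φ (y + s * τ) τ + pt φ (y + s * τ) τ))
      = ∫ τ in Set.Ioi (0 : ℝ), deriv (fun τ : ℝ => φ (y + s * τ) τ) τ := by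
    apply setIntegral_congr_fun measurableSet_Ioi
    intro τ _
    exact ((hasDerivAt_shear hφ y s τ).deriv).symm
  rw [h2, h]
  norm_num

lemma integral_time (hφ : ContDiff ℝ 1 (fun p : ℝ × ℝ => φ p.1 p.2))
    (hs : HasCompactSupport (fun p : ℝ × ℝ => φ p.1 p.2)) (c ξ : ℝ) :
    (∫ τ in Set.Ioi (0 : ℝ),
      (c * (φ (ξ * τ) τ + τ * (ξ * px φ (ξ * τ) τ + pt φ (ξ * τ) τ)))) = 0 := by
  obtain ⟨r, hr0, hv⟩ := vanish_triple hs
  have hg : ContDiff ℝ 1 (fun τ : ℝ => c * (τ * φ (ξ * τ) τ)) :=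
    contDiff_const.mul (contDiff_id.mul
      (hφ.comp ((contDiff_const.mul contDiff_id).prodMk contDiff_id)))
  have hb : HasCompactSupport (fun τ : ℝ => φ (ξ * τ) τ) :=
    DepAux2.supp_curve hr0 (fun p hp => (hv p hp).1) (fun τ => (ξ * τ, τ))
      (fun τ => norm_coord2 _ τ)
  have hgs : HasCompactSupport (fun τ : ℝ => c * (τ * φ (ξ * τ) τ)) := by
    have heq : (fun τ : ℝ => c * (τ * φ (ξ * τ) τ))
        = ((fun τ : ℝ => c * τ) * fun τ : ℝ => φ (ξ * τ) τ) := by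
      funext τ; simp [Pi.mul_apply]; ring
    rw [heq]
    exact hb.mul_left
  have h := HasCompactSupport.integral_Ioi_deriv_eq hg hgs 0
  have h2 : (∫ τ in Set.Ioi (0 : ℝ),
      (c * (φ (ξ * τ) τ + τ * (ξ * px φ (ξ * τ) τ + pt φ (ξ * τ) τ))))
      = ∫ τ in Set.Ioi (0 : ℝ), deriv (fun τ : ℝ => c * (τ * φ (ξ * τ) τ)) τ := by
    apply setIntegral_congr_fun measurableSet_Ioi
    intro τ _
    have hd := ((hasDerivAt_id τ).mul (hasDerivAt_time hφ ξ τ)).const_mul c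
    have hd' : HasDerivAt (fun τ : ℝ => c * (τ * φ (ξ * τ) τ))
        (c * (1 * φ (ξ * τ) τ + τ * (ξ * px φ (ξ * τ) τ + pt φ (ξ * τ) τ))) τ := hd
    rw [hd'.deriv]
    ring
  rw [h2, h]
  norm_num

lemma cont_depG_comp {α : Type*} [TopologicalSpace α] {g : α → ℝ} (hg : Continuous g) :
    Continuous (fun x => depG (g x)) := by
  unfold depG
  fun_prop

lemma fan_FTC (hφ : ContDiff ℝ 1 (fun p : ℝ × ℝ => φ p.1 p.2)) {s₁ s₂ : ℝ}
    (h12 : s₁ ≤ s₂) (h21 : s₂ ≤ 1) (t : ℝ) :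
    (∫ ξ in Set.Ioc s₁ s₂, (-(fanV ξ) * φ (ξ * t) t + fanF ξ * (t * px φ (ξ * t) t)))
      = fanF s₂ * φ (s₂ * t) t - fanF s₁ * φ (s₁ * t) t := by
  rw [← intervalIntegral.integral_of_le h12]
  apply intervalIntegral.integral_eq_sub_of_hasDeriv_right_of_le h12
  · exact (fanF_cont.mul ((cont_phi hφ).comp
      ((continuous_id.mul continuous_const).prodMk continuous_const))).continuousOn
  · intro ξ hξ
    exact (fan_hasDerivAt hφ t (lt_of_lt_of_le hξ.2 h21)).hasDerivWithinAt
  · apply Continuous.intervalIntegrable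
    have c1 : Continuous (fun ξ : ℝ => φ (ξ * t) t) := (cont_phi hφ).comp
      ((continuous_id.mul continuous_const).prodMk continuous_const)
    have c2 : Continuous (fun ξ : ℝ => px φ (ξ * t) t) := (cont_px hφ).comp
      ((continuous_id.mul continuous_const).prodMk continuous_const)
    exact ((fanV_cont.neg).mul c1).add (fanF_cont.mul (continuous_const.mul c2))

lemma RH_identity {ρ : ℝ} (hρ : ρ ≤ 1 / 2) :
    fanF (depH (3 / 4 - ρ / 2)) + ρ * depH (3 / 4 - ρ / 2) - depG ρ = 0 := by
  have h : fanV (depH (3 / 4 - ρ / 2)) = 3 / 4 - ρ / 2 := fanV_depH (by linarith)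
  unfold fanF
  rw [h]
  unfold depG depH
  ring

lemma fanF_eval {a : ℝ} (ha : 1 / 2 ≤ a) : fanF (depH a) = depG a - depH a * a := by
  unfold fanF
  rw [fanV_depH ha]

end DepAux3

namespace DepAux4
open DepAux DepAux2 DepAux3 Set

variable {φ : ℝ → ℝ → ℝ}

lemma inner_eval (hφ : ContDiff ℝ 1 (fun p : ℝ × ℝ => φ p.1 p.2))
    (hs : HasCompactSupport (fun p : ℝ × ℝ => φ p.1 p.2))
    (l ρ s₁ s₂ t : ℝ) (h12 : s₁ ≤ s₂) (ht : 0 < t) :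
    (∫ x : ℝ, ((if x ≤ s₁ * t then l else if x ≤ s₂ * t then fanV (x / t) else ρ) * pt φ x t
      + depG (if x ≤ s₁ * t then l else if x ≤ s₂ * t then fanV (x / t) else ρ) * px φ x t))
    = l * (∫ y in Iic (0 : ℝ), pt φ (y + s₁ * t) t) + depG l * φ (s₁ * t) t
      + (∫ ξ in Ioc s₁ s₂, t * (fanV ξ * pt φ (ξ * t) t + depG (fanV ξ) * px φ (ξ * t) t))
      + ρ * (∫ y in Ioi (0 : ℝ), pt φ (y + s₂ * t) t) + (-(depG ρ) * φ (s₂ * t) t) := by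
  obtain ⟨r, hr0, hv⟩ := vanish_triple hs
  set f : ℝ → ℝ := fun x =>
    ((if x ≤ s₁ * t then l else if x ≤ s₂ * t then fanV (x / t) else ρ) * pt φ x t
      + depG (if x ≤ s₁ * t then l else if x ≤ s₂ * t then fanV (x / t) else ρ) * px φ x t)
    with hfdef
  set g₁ : ℝ → ℝ := fun x => l * pt φ x t + depG l * px φ x t with hg₁def
  set g₂ : ℝ → ℝ := fun x => fanV (x / t) * pt φ x t + depG (fanV (x / t)) * px φ x t
    with hg₂def
  set g₃ : ℝ → ℝ := fun x => ρ * pt φ x t + depG ρ * px φ x t with hg₃def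
  have cpt : Continuous (fun x : ℝ => pt φ x t) :=
    (cont_pt hφ).comp (continuous_id.prodMk continuous_const)
  have cpx : Continuous (fun x : ℝ => px φ x t) :=
    (cont_px hφ).comp (continuous_id.prodMk continuous_const)
  have spt : HasCompactSupport (fun x : ℝ => pt φ x t) :=
    DepAux2.supp_curve hr0 (fun p hp => (hv p hp).2.2) (fun x => (x, t))
      (fun x => norm_coord1 x t)
  have spx : HasCompactSupport (fun x : ℝ => px φ x t) :=
    DepAux2.supp_curve hr0 (fun p hp => (hv p hp).2.1) (fun x => (x, t))
      (fun x => norm_coord1 x t)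
  have ipt : Integrable (fun x : ℝ => pt φ x t) := cpt.integrable_of_hasCompactSupport spt
  have ipx : Integrable (fun x : ℝ => px φ x t) := cpx.integrable_of_hasCompactSupport spx
  have ig₁ : Integrable g₁ := (ipt.const_mul l).add (ipx.const_mul (depG l))
  have ig₃ : Integrable g₃ := (ipt.const_mul ρ).add (ipx.const_mul (depG ρ))
  have cg₂ : Continuous g₂ := by
    have cV : Continuous (fun x : ℝ => fanV (x / t)) :=
      fanV_cont.comp (continuous_id.div_const t)
    exact (cV.mul cpt).add ((cont_depG_comp cV).mul cpx)
  have sg₂ : HasCompactSupport g₂ := by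
    apply HasCompactSupport.intro (isCompact_Icc (a := -r) (b := r))
    intro x hx
    have hxr : r < |x| := by
      simp only [Set.mem_Icc, not_and_or, not_le] at hx
      rcases hx with h | h
      · rw [abs_of_neg (by linarith)]; linarith
      · rw [abs_of_pos (by linarith)]; linarith
    have hnorm : r < ‖((x, t) : ℝ × ℝ)‖ := lt_of_lt_of_le hxr (norm_coord1 x t)
    simp only [hg₂def, (hv _ hnorm).2.1, (hv _ hnorm).2.2, mul_zero, add_zero]
  have ig₂ : Integrable g₂ := cg₂.integrable_of_hasCompactSupport sg₂
  have h12t : s₁ * t ≤ s₂ * t := mul_le_mul_of_nonneg_right h12 ht.le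
  have e₁ : EqOn f g₁ (Iic (s₁ * t)) := by
    intro x hx
    simp only [hfdef, hg₁def, if_pos (mem_Iic.mp hx)]
  have e₂ : EqOn f g₂ (Ioc (s₁ * t) (s₂ * t)) := by
    intro x hx
    simp only [hfdef, hg₂def, if_neg (not_le.mpr hx.1), if_pos hx.2]
  have e₃ : EqOn f g₃ (Ioi (s₂ * t)) := by
    intro x hx
    have hx2 : ¬ x ≤ s₂ * t := not_le.mpr (mem_Ioi.mp hx)
    have hx1 : ¬ x ≤ s₁ * t := not_le.mpr (lt_of_le_of_lt h12t (mem_Ioi.mp hx))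
    simp only [hfdef, hg₃def, if_neg hx1, if_neg hx2]
  have iOn₁ : IntegrableOn f (Iic (s₁ * t)) :=
    (integrableOn_congr_fun e₁ measurableSet_Iic).mpr ig₁.integrableOn
  have iOn₂ : IntegrableOn f (Ioc (s₁ * t) (s₂ * t)) :=
    (integrableOn_congr_fun e₂ measurableSet_Ioc).mpr ig₂.integrableOn
  have iOn₃ : IntegrableOn f (Ioi (s₂ * t)) :=
    (integrableOn_congr_fun e₃ measurableSet_Ioi).mpr ig₃.integrableOn
  have hun : Ioc (s₁ * t) (s₂ * t) ∪ Ioi (s₂ * t) = Ioi (s₁ * t) :=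
    Set.Ioc_union_Ioi_eq_Ioi h12t
  have iOnIoi : IntegrableOn f (Ioi (s₁ * t)) := by
    rw [← hun]; exact iOn₂.union iOn₃
  have hdisj : Disjoint (Ioc (s₁ * t) (s₂ * t)) (Ioi (s₂ * t)) :=
    Set.disjoint_left.mpr (fun x hx hx' => absurd hx.2 (not_le.mpr hx'))
  have hsplit : (∫ x : ℝ, f x)
      = (∫ x in Iic (s₁ * t), f x) + ((∫ x in Ioc (s₁ * t) (s₂ * t), f x)
        + ∫ x in Ioi (s₂ * t), f x) := by
    rw [← intervalIntegral.integral_Iic_add_Ioi iOn₁ iOnIoi]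
    congr 1
    rw [← hun, setIntegral_union hdisj measurableSet_Ioi iOn₂ iOn₃]
  -- evaluate piece 1
  have hp1 : (∫ x in Iic (s₁ * t), f x)
      = l * (∫ y in Iic (0 : ℝ), pt φ (y + s₁ * t) t) + depG l * φ (s₁ * t) t := by
    rw [setIntegral_congr_fun measurableSet_Iic e₁]
    rw [hg₁def]
    rw [integral_add ((ipt.const_mul l).integrableOn) ((ipx.const_mul (depG l)).integrableOn)]
    rw [integral_const_mul, integral_const_mul]
    rw [integral_px_Iic hφ hs t (s₁ * t)]
    rw [DepAux2.translate_Iic (fun x => pt φ x t) (s₁ * t)]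
  -- evaluate piece 3
  have hp3 : (∫ x in Ioi (s₂ * t), f x)
      = ρ * (∫ y in Ioi (0 : ℝ), pt φ (y + s₂ * t) t) + (-(depG ρ) * φ (s₂ * t) t) := by
    rw [setIntegral_congr_fun measurableSet_Ioi e₃]
    rw [hg₃def]
    rw [integral_add ((ipt.const_mul ρ).integrableOn) ((ipx.const_mul (depG ρ)).integrableOn)]
    rw [integral_const_mul, integral_const_mul]
    rw [integral_px_Ioi hφ hs t (s₂ * t)]
    rw [DepAux2.translate_Ioi (fun x => pt φ x t) (s₂ * t)]
    ring
  -- evaluate fan piece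
  have hp2 : (∫ x in Ioc (s₁ * t) (s₂ * t), f x)
      = ∫ ξ in Ioc s₁ s₂, t * (fanV ξ * pt φ (ξ * t) t + depG (fanV ξ) * px φ (ξ * t) t) := by
    rw [setIntegral_congr_fun measurableSet_Ioc e₂]
    have hcv := intervalIntegral.integral_comp_mul_right (a := s₁) (b := s₂) g₂ (ne_of_gt ht)
    have h1 : (∫ x in Ioc (s₁ * t) (s₂ * t), g₂ x) = ∫ x in s₁ * t..s₂ * t, g₂ x :=
      (intervalIntegral.integral_of_le h12t).symm
    rw [h1]
    have h2 : (∫ x in s₁ * t..s₂ * t, g₂ x) = t • ∫ ξ in s₁..s₂, g₂ (ξ * t) := by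
      rw [hcv, smul_inv_smul₀ (ne_of_gt ht)]
    rw [h2, intervalIntegral.integral_of_le h12, smul_eq_mul, ← integral_const_mul]
    apply setIntegral_congr_fun measurableSet_Ioc
    intro ξ _
    have hξt : ξ * t / t = ξ := mul_div_cancel_right₀ ξ (ne_of_gt ht)
    simp only [hg₂def, hξt]
  rw [hsplit, hp1, hp2, hp3]
  ring

end DepAux4

open DepAux DepAux2 DepAux3 DepAux4 Set

/-- The mixed rarefaction–shock (contact-discontinuity) profile is a weak solution of
the conservation law `∂_t u + ∂_x G(u) = 0` with Riemann initial datum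
`u₀ = λ·1_{x<0} + ρ·1_{x≥0}`, for `ρ ∈ [0, 1/2]` and `λ ∈ (3/4 - ρ/2, 1]`, where
`ρ* = 3/4 - ρ/2`. -/
theorem dep_rarefaction_shock_is_weak_solution
    (ρ l : ℝ) (hρ : ρ ∈ Set.Icc (0 : ℝ) (1 / 2)) (hlρ : 3 / 4 - ρ / 2 < l) (hl : l ≤ 1)
    (ρstar : ℝ) (hρstar : ρstar = 3 / 4 - ρ / 2)
    (u₀ : ℝ → ℝ) (hu₀ : ∀ x : ℝ, u₀ x = if x < 0 then l else ρ)
    (u : ℝ → ℝ → ℝ)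
    (hu0 : ∀ x : ℝ, u x 0 = u₀ x)
    (hu : ∀ x t : ℝ, 0 < t → u x t =
      if x ≤ depH l * t then l
      else if x ≤ depH ρstar * t then 1 / 2 + Real.sqrt ((1 - x / t) / 12)
      else ρ)
    (φ : ℝ → ℝ → ℝ)
    (hφ : ContDiff ℝ 1 (fun p : ℝ × ℝ => φ p.1 p.2))
    (hφsupp : HasCompactSupport (fun p : ℝ × ℝ => φ p.1 p.2)) :
    (∫ t in Set.Ioi (0 : ℝ), ∫ x : ℝ,
        (u x t * deriv (fun s => φ x s) t
          + depG (u x t) * deriv (fun y => φ y t) x))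
      + (∫ x : ℝ, u₀ x * φ x 0) = 0 := by
  obtain ⟨hρ0, hρh⟩ := hρ
  have hl_rs : ρstar < l := by rw [hρstar]; exact hlρ
  have hρs_half : 1 / 2 ≤ ρstar := by rw [hρstar]; linarith
  have hl_half : (1 : ℝ) / 2 < l := lt_of_le_of_lt hρs_half hl_rs
  set s₁ := depH l with hs₁def
  set s₂ := depH ρstar with hs₂def
  have h12 : s₁ ≤ s₂ := by
    rw [hs₁def, hs₂def]; unfold depH; nlinarith
  have hs₂1 : s₂ ≤ 1 := by
    rw [hs₂def]; unfold depH; nlinarith [sq_nonneg (ρstar - 1 / 2)]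
  have hVs₁ : fanV s₁ = l := fanV_depH hl_half.le
  have hVs₂ : fanV s₂ = ρstar := fanV_depH hρs_half
  obtain ⟨r, hr0, hv⟩ := vanish_triple hφsupp
  have cΦ : Continuous (fun p : ℝ × ℝ => φ p.1 p.2) := cont_phi hφ
  have cPX : Continuous (fun p : ℝ × ℝ => px φ p.1 p.2) := cont_px hφ
  have cPT : Continuous (fun p : ℝ × ℝ => pt φ p.1 p.2) := cont_pt hφ
  -- rewrite derivatives
  have hdx : ∀ x t : ℝ, deriv (fun y => φ y t) x = px φ x t :=
    fun x t => (hasDerivAt_slice_x hφ x t).deriv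
  have hdt : ∀ x t : ℝ, deriv (fun s => φ x s) t = pt φ x t :=
    fun x t => (hasDerivAt_slice_t hφ x t).deriv
  simp only [hdx, hdt]
  -- generic product integrability
  have hprod_shear : ∀ (g : ℝ × ℝ → ℝ), Continuous g → (∀ p : ℝ × ℝ, r < ‖p‖ → g p = 0) →
      ∀ (s : ℝ) (S T : Set ℝ), MeasurableSet S → MeasurableSet T →
      IntegrableOn (fun q : ℝ × ℝ => g (q.2 + s * q.1, q.1)) (S ×ˢ T) := by
    intro g hg hvg s S T hS hT
    refine integrableOn_of_vanish (F := fun q : ℝ × ℝ => g (q.2 + s * q.1, q.1))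
      (K := Icc (-r) r ×ˢ Icc (-(r + |s| * r)) (r + |s| * r))
      (hg.comp ((continuous_snd.add (continuous_const.mul continuous_fst)).prodMk
        continuous_fst))
      (isCompact_Icc.prod isCompact_Icc) (hS.prod hT) ?_
    intro q hq
    by_cases h1 : |q.1| ≤ r
    · have h2 : ¬ |q.2| ≤ r + |s| * r := by
        intro hc
        exact hq.2 ⟨mem_Icc.mpr (abs_le.mp h1), mem_Icc.mpr (abs_le.mp hc)⟩
      push_neg at h2
      apply hvg
      have hb : |s * q.1| ≤ |s| * r := by
        rw [abs_mul]
        exact mul_le_mul_of_nonneg_left h1 (abs_nonneg s)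
      have hest : r < |q.2 + s * q.1| := by
        have h3 : |q.2| ≤ |q.2 + s * q.1| + |s * q.1| := by
          have := abs_add_le (q.2 + s * q.1) (-(s * q.1))
          simpa using this
        have habs : |(-(s * q.1))| = |s * q.1| := abs_neg _
        linarith
      exact lt_of_lt_of_le hest (norm_coord1 _ _)
    · push_neg at h1
      apply hvg
      exact lt_of_lt_of_le h1 (norm_coord2 _ _)
  have hprod_shear' : ∀ (g : ℝ × ℝ → ℝ), Continuous g → (∀ p : ℝ × ℝ, r < ‖p‖ → g p = 0) →
      ∀ (s : ℝ) (S T : Set ℝ), MeasurableSet S → MeasurableSet T →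
      IntegrableOn (fun q : ℝ × ℝ => g (q.1 + s * q.2, q.2)) (S ×ˢ T) := by
    intro g hg hvg s S T hS hT
    refine integrableOn_of_vanish (F := fun q : ℝ × ℝ => g (q.1 + s * q.2, q.2))
      (K := Icc (-(r + |s| * r)) (r + |s| * r) ×ˢ Icc (-r) r)
      (hg.comp ((continuous_fst.add (continuous_const.mul continuous_snd)).prodMk
        continuous_snd))
      (isCompact_Icc.prod isCompact_Icc) (hS.prod hT) ?_
    intro q hq
    by_cases h1 : |q.2| ≤ r
    · have h2 : ¬ |q.1| ≤ r + |s| * r := by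
        intro hc
        exact hq.2 ⟨mem_Icc.mpr (abs_le.mp hc), mem_Icc.mpr (abs_le.mp h1)⟩
      push_neg at h2
      apply hvg
      have hb : |s * q.2| ≤ |s| * r := by
        rw [abs_mul]
        exact mul_le_mul_of_nonneg_left h1 (abs_nonneg s)
      have hest : r < |q.1 + s * q.2| := by
        have h3 : |q.1| ≤ |q.1 + s * q.2| + |s * q.2| := by
          have := abs_add_le (q.1 + s * q.2) (-(s * q.2))
          simpa using this
        linarith
      exact lt_of_lt_of_le hest (norm_coord1 _ _)
    · push_neg at h1
      apply hvg
      exact lt_of_lt_of_le h1 (norm_coord2 _ _)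
  have hprod_fan : ∀ (F : ℝ × ℝ → ℝ), Continuous F → (∀ q : ℝ × ℝ, r < |q.1| → F q = 0) →
      IntegrableOn F (Ioi (0 : ℝ) ×ˢ Ioc s₁ s₂) := by
    intro F hF hvF
    refine integrableOn_of_vanish (K := Icc (-r) r ×ˢ Icc s₁ s₂) hF
      (isCompact_Icc.prod isCompact_Icc) (measurableSet_Ioi.prod measurableSet_Ioc) ?_
    intro q hq
    apply hvF
    by_contra hc
    push_neg at hc
    exact hq.2 ⟨mem_Icc.mpr (abs_le.mp hc), mem_Icc.mpr ⟨(hq.1.2.1).le, hq.1.2.2⟩⟩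
  -- specific vanish facts
  have hvφ' : ∀ p : ℝ × ℝ, r < ‖p‖ → φ p.1 p.2 = 0 := fun p hp => (hv p hp).1
  have hvpx : ∀ p : ℝ × ℝ, r < ‖p‖ → px φ p.1 p.2 = 0 := fun p hp => (hv p hp).2.1
  have hvpt : ∀ p : ℝ × ℝ, r < ‖p‖ → pt φ p.1 p.2 = 0 := fun p hp => (hv p hp).2.2
  have hF₁ : IntegrableOn (fun q : ℝ × ℝ => pt φ (q.2 + s₁ * q.1) q.1)
      (Ioi (0:ℝ) ×ˢ Iic (0:ℝ)) :=
    hprod_shear _ cPT hvpt s₁ _ _ measurableSet_Ioi measurableSet_Iic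
  have hF₁' : IntegrableOn (fun q : ℝ × ℝ => px φ (q.1 + s₁ * q.2) q.2)
      (Iic (0:ℝ) ×ˢ Ioi (0:ℝ)) :=
    hprod_shear' _ cPX hvpx s₁ _ _ measurableSet_Iic measurableSet_Ioi
  have hF₄ : IntegrableOn (fun q : ℝ × ℝ => pt φ (q.2 + s₂ * q.1) q.1)
      (Ioi (0:ℝ) ×ˢ Ioi (0:ℝ)) :=
    hprod_shear _ cPT hvpt s₂ _ _ measurableSet_Ioi measurableSet_Ioi
  have hF₄' : IntegrableOn (fun q : ℝ × ℝ => px φ (q.1 + s₂ * q.2) q.2)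
      (Ioi (0:ℝ) ×ˢ Ioi (0:ℝ)) :=
    hprod_shear' _ cPX hvpx s₂ _ _ measurableSet_Ioi measurableSet_Ioi
  have cray : Continuous (fun q : ℝ × ℝ => ((q.2 * q.1, q.1) : ℝ × ℝ)) :=
    (continuous_snd.mul continuous_fst).prodMk continuous_fst
  have hnorm_ray : ∀ q : ℝ × ℝ, |q.1| ≤ ‖((q.2 * q.1, q.1) : ℝ × ℝ)‖ :=
    fun q => norm_coord2 _ _
  have hFfan : IntegrableOn (fun q : ℝ × ℝ =>
      q.1 * (fanV q.2 * pt φ (q.2 * q.1) q.1 + depG (fanV q.2) * px φ (q.2 * q.1) q.1))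
      (Ioi (0:ℝ) ×ˢ Ioc s₁ s₂) := by
    apply hprod_fan
    · exact continuous_fst.mul (((fanV_cont.comp continuous_snd).mul (cPT.comp cray)).add
        ((cont_depG_comp (fanV_cont.comp continuous_snd)).mul (cPX.comp cray)))
    · intro q hq
      rw [hvpt _ (lt_of_lt_of_le hq (hnorm_ray q)), hvpx _ (lt_of_lt_of_le hq (hnorm_ray q))]
      ring
  have hFD₁ : IntegrableOn (fun q : ℝ × ℝ =>
      fanV q.2 * (φ (q.2 * q.1) q.1
        + q.1 * (q.2 * px φ (q.2 * q.1) q.1 + pt φ (q.2 * q.1) q.1)))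
      (Ioi (0:ℝ) ×ˢ Ioc s₁ s₂) := by
    apply hprod_fan
    · exact (fanV_cont.comp continuous_snd).mul ((cΦ.comp cray).add
        (continuous_fst.mul ((continuous_snd.mul (cPX.comp cray)).add (cPT.comp cray))))
    · intro q hq
      rw [hvφ' _ (lt_of_lt_of_le hq (hnorm_ray q)), hvpt _ (lt_of_lt_of_le hq (hnorm_ray q)),
        hvpx _ (lt_of_lt_of_le hq (hnorm_ray q))]
      ring
  have hFD₂ : IntegrableOn (fun q : ℝ × ℝ =>
      -(fanV q.2) * φ (q.2 * q.1) q.1 + fanF q.2 * (q.1 * px φ (q.2 * q.1) q.1))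
      (Ioi (0:ℝ) ×ˢ Ioc s₁ s₂) := by
    apply hprod_fan
    · exact ((fanV_cont.comp continuous_snd).neg.mul (cΦ.comp cray)).add
        ((fanF_cont.comp continuous_snd).mul (continuous_fst.mul (cPX.comp cray)))
    · intro q hq
      rw [hvφ' _ (lt_of_lt_of_le hq (hnorm_ray q)), hvpx _ (lt_of_lt_of_le hq (hnorm_ray q))]
      ring
  have iJ : ∀ s : ℝ, Integrable (fun t => φ (s * t) t) := by
    intro s
    have hc : Continuous (fun t : ℝ => φ (s * t) t) :=
      cΦ.comp ((continuous_const.mul continuous_id).prodMk continuous_id)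
    exact hc.integrable_of_hasCompactSupport
      (DepAux2.supp_curve hr0 hvφ' (fun τ => (s * τ, τ)) (fun τ => norm_coord2 _ τ))
  have iφ0 : Integrable (fun x => φ x 0) := by
    have hc : Continuous (fun x : ℝ => φ x 0) :=
      cΦ.comp (continuous_id.prodMk continuous_const)
    exact hc.integrable_of_hasCompactSupport
      (DepAux2.supp_curve hr0 hvφ' (fun x => (x, 0)) (fun x => norm_coord1 x 0))
  -- inner identity
  have hinner : ∀ t ∈ Ioi (0 : ℝ),
      (∫ x : ℝ, (u x t * pt φ x t + depG (u x t) * px φ x t))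
      = l * (∫ y in Iic (0 : ℝ), pt φ (y + s₁ * t) t) + depG l * φ (s₁ * t) t
        + (∫ ξ in Ioc s₁ s₂, t * (fanV ξ * pt φ (ξ * t) t + depG (fanV ξ) * px φ (ξ * t) t))
        + ρ * (∫ y in Ioi (0 : ℝ), pt φ (y + s₂ * t) t) + (-(depG ρ) * φ (s₂ * t) t) := by
    intro t ht
    have ht' : (0:ℝ) < t := ht
    have hcong : (fun x => u x t * pt φ x t + depG (u x t) * px φ x t)
        = fun x => ((if x ≤ s₁ * t then l else if x ≤ s₂ * t then fanV (x / t) else ρ)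
            * pt φ x t
          + depG (if x ≤ s₁ * t then l else if x ≤ s₂ * t then fanV (x / t) else ρ)
            * px φ x t) := by
      funext x
      rw [hu x t ht']
      rfl
    rw [hcong]
    exact inner_eval hφ hφsupp l ρ s₁ s₂ t h12 ht'
  have houter : (∫ t in Ioi (0:ℝ), ∫ x : ℝ, (u x t * pt φ x t + depG (u x t) * px φ x t))
      = ∫ t in Ioi (0:ℝ),
        (l * (∫ y in Iic (0 : ℝ), pt φ (y + s₁ * t) t) + depG l * φ (s₁ * t) t
        + (∫ ξ in Ioc s₁ s₂, t * (fanV ξ * pt φ (ξ * t) t + depG (fanV ξ) * px φ (ξ * t) t))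
        + ρ * (∫ y in Ioi (0 : ℝ), pt φ (y + s₂ * t) t) + (-(depG ρ) * φ (s₂ * t) t)) :=
    setIntegral_congr_fun measurableSet_Ioi hinner
  rw [houter]
  -- integrability of the five terms
  have iQ₁ : Integrable (fun t => l * ∫ y in Iic (0:ℝ), pt φ (y + s₁ * t) t)
      (volume.restrict (Ioi (0:ℝ))) :=
    (DepAux2.marginal_integrable (f := fun t y => pt φ (y + s₁ * t) t) hF₁).const_mul l
  have iQ₂ : Integrable (fun t => depG l * φ (s₁ * t) t) (volume.restrict (Ioi (0:ℝ))) :=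
    ((iJ s₁).const_mul (depG l)).integrableOn
  have iQ₃ : Integrable (fun t => ∫ ξ in Ioc s₁ s₂,
      t * (fanV ξ * pt φ (ξ * t) t + depG (fanV ξ) * px φ (ξ * t) t))
      (volume.restrict (Ioi (0:ℝ))) :=
    DepAux2.marginal_integrable (f := fun t ξ =>
      t * (fanV ξ * pt φ (ξ * t) t + depG (fanV ξ) * px φ (ξ * t) t)) hFfan
  have iQ₄ : Integrable (fun t => ρ * ∫ y in Ioi (0:ℝ), pt φ (y + s₂ * t) t)
      (volume.restrict (Ioi (0:ℝ))) :=
    (DepAux2.marginal_integrable (f := fun t y => pt φ (y + s₂ * t) t) hF₄).const_mul ρ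
  have iQ₅ : Integrable (fun t => -(depG ρ) * φ (s₂ * t) t) (volume.restrict (Ioi (0:ℝ))) :=
    ((iJ s₂).const_mul (-(depG ρ))).integrableOn
  have iQ₁₂ : Integrable (fun t => l * (∫ y in Iic (0:ℝ), pt φ (y + s₁ * t) t)
      + depG l * φ (s₁ * t) t) (volume.restrict (Ioi (0:ℝ))) := iQ₁.add iQ₂
  have iQ₁₃ : Integrable (fun t => l * (∫ y in Iic (0:ℝ), pt φ (y + s₁ * t) t)
      + depG l * φ (s₁ * t) t
      + ∫ ξ in Ioc s₁ s₂, t * (fanV ξ * pt φ (ξ * t) t + depG (fanV ξ) * px φ (ξ * t) t))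
      (volume.restrict (Ioi (0:ℝ))) := iQ₁₂.add iQ₃
  have iQ₁₄ : Integrable (fun t => l * (∫ y in Iic (0:ℝ), pt φ (y + s₁ * t) t)
      + depG l * φ (s₁ * t) t
      + (∫ ξ in Ioc s₁ s₂, t * (fanV ξ * pt φ (ξ * t) t + depG (fanV ξ) * px φ (ξ * t) t))
      + ρ * ∫ y in Ioi (0:ℝ), pt φ (y + s₂ * t) t)
      (volume.restrict (Ioi (0:ℝ))) := iQ₁₃.add iQ₄
  rw [integral_add iQ₁₄ iQ₅, integral_add iQ₁₃ iQ₄, integral_add iQ₁₂ iQ₃,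
      integral_add iQ₁ iQ₂]
  -- shear inner evaluation (generic in s, y)
  have hin_gen : ∀ (s y : ℝ), (∫ t in Ioi (0:ℝ), pt φ (y + s * t) t)
      = -φ y 0 - s * ∫ t in Ioi (0:ℝ), px φ (y + s * t) t := by
    intro s y
    have hshear := integral_shear hφ hφsupp y s
    have hix : Integrable (fun τ => px φ (y + s * τ) τ) := by
      have hc : Continuous (fun τ : ℝ => px φ (y + s * τ) τ) :=
        cPX.comp ((continuous_const.add (continuous_const.mul continuous_id)).prodMk
          continuous_id)
      exact hc.integrable_of_hasCompactSupport
        (DepAux2.supp_curve hr0 hvpx (fun τ => (y + s * τ, τ)) (fun τ => norm_coord2 _ τ))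
    have hit : Integrable (fun τ => pt φ (y + s * τ) τ) := by
      have hc : Continuous (fun τ : ℝ => pt φ (y + s * τ) τ) :=
        cPT.comp ((continuous_const.add (continuous_const.mul continuous_id)).prodMk
          continuous_id)
      exact hc.integrable_of_hasCompactSupport
        (DepAux2.supp_curve hr0 hvpt (fun τ => (y + s * τ, τ)) (fun τ => norm_coord2 _ τ))
    have hisum : Integrable (fun τ => s * px φ (y + s * τ) τ + pt φ (y + s * τ) τ) :=
      (hix.const_mul s).add hit
    have hismul : Integrable (fun τ => s * px φ (y + s * τ) τ) := hix.const_mul s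
    have hrw : (fun τ => pt φ (y + s * τ) τ)
        = fun τ => (s * px φ (y + s * τ) τ + pt φ (y + s * τ) τ)
          - s * px φ (y + s * τ) τ := by
      funext τ; ring
    rw [hrw, integral_sub hisum.integrableOn hismul.integrableOn, hshear, integral_const_mul]
  -- E1
  have hE1 : (∫ t in Ioi (0:ℝ), l * ∫ y in Iic (0:ℝ), pt φ (y + s₁ * t) t)
      = -(l * ∫ x in Iic (0:ℝ), φ x 0) - l * s₁ * (∫ t in Ioi (0:ℝ), φ (s₁ * t) t) := by
    rw [integral_const_mul]
    rw [DepAux2.swap_helper (f := fun t y => pt φ (y + s₁ * t) t) hF₁]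
    rw [setIntegral_congr_fun measurableSet_Iic (fun y _ => hin_gen s₁ y)]
    have ia : Integrable (fun y : ℝ => -φ y 0) (volume.restrict (Iic (0:ℝ))) :=
      iφ0.neg.integrableOn
    have ib : Integrable (fun y : ℝ => s₁ * ∫ t in Ioi (0:ℝ), px φ (y + s₁ * t) t)
        (volume.restrict (Iic (0:ℝ))) :=
      (DepAux2.marginal_integrable (f := fun y t => px φ (y + s₁ * t) t) hF₁').const_mul s₁
    rw [integral_sub ia ib]
    rw [integral_neg, integral_const_mul]
    rw [DepAux2.swap_helper (f := fun y t => px φ (y + s₁ * t) t) hF₁']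
    have hback : ∀ t ∈ Ioi (0:ℝ), (∫ y in Iic (0:ℝ), px φ (y + s₁ * t) t) = φ (s₁ * t) t := by
      intro t _
      rw [show (∫ y in Iic (0:ℝ), px φ (y + s₁ * t) t) = ∫ x in Iic (s₁ * t), px φ x t from
        (DepAux2.translate_Iic (fun x => px φ x t) (s₁ * t)).symm]
      exact integral_px_Iic hφ hφsupp t (s₁ * t)
    rw [setIntegral_congr_fun measurableSet_Ioi hback]
    ring
  -- E2
  have hE2 : (∫ t in Ioi (0:ℝ), depG l * φ (s₁ * t) t)
      = depG l * ∫ t in Ioi (0:ℝ), φ (s₁ * t) t := integral_const_mul _ _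
  -- E3
  have hE3 : (∫ t in Ioi (0:ℝ), ∫ ξ in Ioc s₁ s₂,
      t * (fanV ξ * pt φ (ξ * t) t + depG (fanV ξ) * px φ (ξ * t) t))
      = fanF s₂ * (∫ t in Ioi (0:ℝ), φ (s₂ * t) t)
        - fanF s₁ * (∫ t in Ioi (0:ℝ), φ (s₁ * t) t) := by
    have cur : ∀ t : ℝ, Continuous (fun ξ : ℝ => ((ξ * t, t) : ℝ × ℝ)) :=
      fun t => (continuous_id.mul continuous_const).prodMk continuous_const
    have hsplitD : ∀ t : ℝ, (∫ ξ in Ioc s₁ s₂,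
        t * (fanV ξ * pt φ (ξ * t) t + depG (fanV ξ) * px φ (ξ * t) t))
        = (∫ ξ in Ioc s₁ s₂,
            fanV ξ * (φ (ξ * t) t + t * (ξ * px φ (ξ * t) t + pt φ (ξ * t) t)))
          + ∫ ξ in Ioc s₁ s₂, (-(fanV ξ) * φ (ξ * t) t + fanF ξ * (t * px φ (ξ * t) t)) := by
      intro t
      have c₁ : Continuous (fun ξ : ℝ =>
          fanV ξ * (φ (ξ * t) t + t * (ξ * px φ (ξ * t) t + pt φ (ξ * t) t))) :=
        fanV_cont.mul ((cΦ.comp (cur t)).add (continuous_const.mul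
          ((continuous_id.mul (cPX.comp (cur t))).add (cPT.comp (cur t)))))
      have c₂ : Continuous (fun ξ : ℝ =>
          -(fanV ξ) * φ (ξ * t) t + fanF ξ * (t * px φ (ξ * t) t)) :=
        (fanV_cont.neg.mul (cΦ.comp (cur t))).add
          (fanF_cont.mul (continuous_const.mul (cPX.comp (cur t))))
      rw [← integral_add (c₁.integrableOn_Ioc) (c₂.integrableOn_Ioc)]
      apply setIntegral_congr_fun measurableSet_Ioc
      intro ξ _
      show t * (fanV ξ * pt φ (ξ * t) t + depG (fanV ξ) * px φ (ξ * t) t)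
        = fanV ξ * (φ (ξ * t) t + t * (ξ * px φ (ξ * t) t + pt φ (ξ * t) t))
          + (-(fanV ξ) * φ (ξ * t) t + fanF ξ * (t * px φ (ξ * t) t))
      unfold fanF
      ring
    simp only [hsplitD]
    have iD₁ : Integrable (fun t => ∫ ξ in Ioc s₁ s₂,
        fanV ξ * (φ (ξ * t) t + t * (ξ * px φ (ξ * t) t + pt φ (ξ * t) t)))
        (volume.restrict (Ioi (0:ℝ))) :=
      DepAux2.marginal_integrable (f := fun t ξ =>
        fanV ξ * (φ (ξ * t) t + t * (ξ * px φ (ξ * t) t + pt φ (ξ * t) t))) hFD₁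
    have iD₂ : Integrable (fun t => ∫ ξ in Ioc s₁ s₂,
        (-(fanV ξ) * φ (ξ * t) t + fanF ξ * (t * px φ (ξ * t) t)))
        (volume.restrict (Ioi (0:ℝ))) :=
      DepAux2.marginal_integrable (f := fun t ξ =>
        -(fanV ξ) * φ (ξ * t) t + fanF ξ * (t * px φ (ξ * t) t)) hFD₂
    rw [integral_add iD₁ iD₂]
    have h0 : (∫ t in Ioi (0:ℝ), ∫ ξ in Ioc s₁ s₂,
        fanV ξ * (φ (ξ * t) t + t * (ξ * px φ (ξ * t) t + pt φ (ξ * t) t))) = 0 := by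
      rw [DepAux2.swap_helper (f := fun t ξ =>
        fanV ξ * (φ (ξ * t) t + t * (ξ * px φ (ξ * t) t + pt φ (ξ * t) t))) hFD₁]
      rw [setIntegral_congr_fun measurableSet_Ioc
        (fun ξ _ => integral_time hφ hφsupp (fanV ξ) ξ)]
      simp
    rw [h0, zero_add]
    have hftc : ∀ t : ℝ, (∫ ξ in Ioc s₁ s₂,
        (-(fanV ξ) * φ (ξ * t) t + fanF ξ * (t * px φ (ξ * t) t)))
        = fanF s₂ * φ (s₂ * t) t - fanF s₁ * φ (s₁ * t) t :=
      fun t => fan_FTC hφ h12 hs₂1 t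
    simp only [hftc]
    have ic : Integrable (fun t : ℝ => fanF s₂ * φ (s₂ * t) t)
        (volume.restrict (Ioi (0:ℝ))) := ((iJ s₂).const_mul (fanF s₂)).integrableOn
    have id' : Integrable (fun t : ℝ => fanF s₁ * φ (s₁ * t) t)
        (volume.restrict (Ioi (0:ℝ))) := ((iJ s₁).const_mul (fanF s₁)).integrableOn
    rw [integral_sub ic id', integral_const_mul, integral_const_mul]
  -- E4
  have hE4 : (∫ t in Ioi (0:ℝ), ρ * ∫ y in Ioi (0:ℝ), pt φ (y + s₂ * t) t)
      = -(ρ * ∫ x in Ioi (0:ℝ), φ x 0) + ρ * s₂ * (∫ t in Ioi (0:ℝ), φ (s₂ * t) t) := by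
    rw [integral_const_mul]
    rw [DepAux2.swap_helper (f := fun t y => pt φ (y + s₂ * t) t) hF₄]
    rw [setIntegral_congr_fun measurableSet_Ioi (fun y _ => hin_gen s₂ y)]
    have ia : Integrable (fun y : ℝ => -φ y 0) (volume.restrict (Ioi (0:ℝ))) :=
      iφ0.neg.integrableOn
    have ib : Integrable (fun y : ℝ => s₂ * ∫ t in Ioi (0:ℝ), px φ (y + s₂ * t) t)
        (volume.restrict (Ioi (0:ℝ))) :=
      (DepAux2.marginal_integrable (f := fun y t => px φ (y + s₂ * t) t) hF₄').const_mul s₂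
    rw [integral_sub ia ib]
    rw [integral_neg, integral_const_mul]
    rw [DepAux2.swap_helper (f := fun y t => px φ (y + s₂ * t) t) hF₄']
    have hback : ∀ t ∈ Ioi (0:ℝ), (∫ y in Ioi (0:ℝ), px φ (y + s₂ * t) t)
        = -φ (s₂ * t) t := by
      intro t _
      rw [show (∫ y in Ioi (0:ℝ), px φ (y + s₂ * t) t) = ∫ x in Ioi (s₂ * t), px φ x t from
        (DepAux2.translate_Ioi (fun x => px φ x t) (s₂ * t)).symm]
      exact integral_px_Ioi hφ hφsupp t (s₂ * t)
    rw [setIntegral_congr_fun measurableSet_Ioi hback]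
    rw [integral_neg]
    ring
  -- E5
  have hE5 : (∫ t in Ioi (0:ℝ), -(depG ρ) * φ (s₂ * t) t)
      = -(depG ρ) * ∫ t in Ioi (0:ℝ), φ (s₂ * t) t := integral_const_mul _ _
  -- initial datum
  have hinit : (∫ x : ℝ, u₀ x * φ x 0)
      = l * (∫ x in Iic (0:ℝ), φ x 0) + ρ * (∫ x in Ioi (0:ℝ), φ x 0) := by
    have hcong : (fun x => u₀ x * φ x 0) = fun x => (if x < 0 then l else ρ) * φ x 0 := by
      funext x; rw [hu₀ x]
    rw [hcong]
    have e₁ : EqOn (fun x => (if x < 0 then l else ρ) * φ x 0) (fun x => l * φ x 0)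
        (Iio (0:ℝ)) := by
      intro x hx; simp only [if_pos (mem_Iio.mp hx)]
    have e₂ : EqOn (fun x => (if x < 0 then l else ρ) * φ x 0) (fun x => ρ * φ x 0)
        (Ici (0:ℝ)) := by
      intro x hx; simp only [if_neg (not_lt.mpr (mem_Ici.mp hx))]
    have i₁ : IntegrableOn (fun x => (if x < 0 then l else ρ) * φ x 0) (Iio (0:ℝ)) :=
      (integrableOn_congr_fun e₁ measurableSet_Iio).mpr (iφ0.const_mul l).integrableOn
    have i₂ : IntegrableOn (fun x => (if x < 0 then l else ρ) * φ x 0) (Ici (0:ℝ)) :=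
      (integrableOn_congr_fun e₂ measurableSet_Ici).mpr (iφ0.const_mul ρ).integrableOn
    rw [← intervalIntegral.integral_Iio_add_Ici i₁ i₂]
    rw [setIntegral_congr_fun measurableSet_Iio e₁, setIntegral_congr_fun measurableSet_Ici e₂]
    rw [integral_const_mul, integral_const_mul]
    rw [setIntegral_congr_set Iio_ae_eq_Iic,
      setIntegral_congr_set (Ioi_ae_eq_Ici (a := (0:ℝ))).symm]
  rw [hE1, hE2, hE3, hE4, hE5, hinit]
  -- final algebra
  have hfan₁ : fanF s₁ = depG l - s₁ * l := by
    have h : fanF s₁ = depG (fanV s₁) - s₁ * fanV s₁ := rfl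
    rw [h, hVs₁]
  have hRH : fanF s₂ + ρ * s₂ - depG ρ = 0 := by
    have h := RH_identity hρh
    rw [← hρstar, ← hs₂def] at h
    exact h
  rw [hfan₁]
  linear_combination (∫ t in Ioi (0:ℝ), φ (s₂ * t) t) * hRH
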